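/- For m×n complex matrices A and B, A ≤⋄ B holds if and only if A† = A† B A† = A† B B† = B† B A†. -/
import Mathlib

open Matrix

/-- Column space (range) of a complex matrix. -/
noncomputable def mrange {m n : Type*} [Fintype n] (A : Matrix m n ℂ) : Submodule ℂ (m → ℂ) :=
  LinearMap.range A.mulVecLin

/-- The diamond partial order on rectangular complex matrices. -/
def diamondLE {m n : Type*} [Fintype m] [Fintype n] (A B : Matrix m n ℂ) : Prop :=
  mrange A ≤ mrange B ∧ mrange Aᴴ ≤ mrange Bᴴ ∧ A * Bᴴ * A = A * Aᴴ * A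

/-- `X` satisfies the four Penrose equations for `A`. -/
def IsMP {m n : Type*} [Fintype m] [Fintype n] (A : Matrix m n ℂ) (X : Matrix n m ℂ) : Prop :=
  A * X * A = A ∧ X * A * X = X ∧ (A * X)ᴴ = A * X ∧ (X * A)ᴴ = X * A

lemma matrix_ext_mulVec {m n : Type*} [Fintype n] [DecidableEq n]
    {X Y : Matrix m n ℂ} (h : ∀ v, X *ᵥ v = Y *ᵥ v) : X = Y := by
  ext i j
  have := congrFun (h (Pi.single j 1)) i
  simpa using this

lemma range_le_iff {m n k : Type*} [Fintype m] [Fintype n] [Fintype k] [DecidableEq n]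
    (A : Matrix k n ℂ) (B : Matrix k m ℂ) (Bd : Matrix m k ℂ) (hB : B * Bd * B = B) :
    mrange A ≤ mrange B ↔ B * Bd * A = A := by
  constructor
  · intro h
    apply matrix_ext_mulVec
    intro v
    obtain ⟨x, hx⟩ := h ⟨v, rfl⟩
    simp only [mulVecLin_apply] at hx
    calc (B * Bd * A) *ᵥ v = (B * Bd) *ᵥ (A *ᵥ v) := by rw [← mulVec_mulVec]
      _ = (B * Bd) *ᵥ (B *ᵥ x) := by rw [hx]
      _ = (B * Bd * B) *ᵥ x := by rw [mulVec_mulVec]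
      _ = B *ᵥ x := by rw [hB]
      _ = A *ᵥ v := hx
  · intro h y hy
    obtain ⟨x, hx⟩ := hy
    refine ⟨Bd *ᵥ (A *ᵥ x), ?_⟩
    simp only [mulVecLin_apply] at hx ⊢
    rw [mulVec_mulVec, mulVec_mulVec, h, hx]

theorem stmt6 {m n : ℕ} (A B : Matrix (Fin m) (Fin n) ℂ) (Ad Bd : Matrix (Fin n) (Fin m) ℂ)
    (hAd : IsMP A Ad) (hBd : IsMP B Bd) :
    diamondLE A B ↔ (Ad = Ad * B * Ad ∧ Ad = Ad * B * Bd ∧ Ad = Bd * B * Ad) := by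
  obtain ⟨hA1, hA2, hA3, hA4⟩ := hAd
  obtain ⟨hB1, hB2, hB3, hB4⟩ := hBd
  -- derived identities
  have e1 : Ad = Aᴴ * Adᴴ * Ad := by
    calc Ad = Ad * A * Ad := hA2.symm
      _ = (Ad * A)ᴴ * Ad := by rw [hA4]
      _ = Aᴴ * Adᴴ * Ad := by rw [conjTranspose_mul]
  have e2 : Ad = Ad * Adᴴ * Aᴴ := by
    calc Ad = Ad * A * Ad := hA2.symm
      _ = Ad * (A * Ad) := by rw [Matrix.mul_assoc]
      _ = Ad * (A * Ad)ᴴ := by rw [hA3]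
      _ = Ad * (Adᴴ * Aᴴ) := by rw [conjTranspose_mul]
      _ = Ad * Adᴴ * Aᴴ := by rw [Matrix.mul_assoc]
  have e3 : A = Adᴴ * Aᴴ * A := by
    calc A = A * Ad * A := hA1.symm
      _ = (A * Ad)ᴴ * A := by rw [hA3]
      _ = Adᴴ * Aᴴ * A := by rw [conjTranspose_mul]
  have e4 : A = A * Aᴴ * Adᴴ := by
    calc A = A * Ad * A := hA1.symm
      _ = A * (Ad * A) := by rw [Matrix.mul_assoc]
      _ = A * (Ad * A)ᴴ := by rw [hA4]
      _ = A * (Aᴴ * Adᴴ) := by rw [conjTranspose_mul]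
      _ = A * Aᴴ * Adᴴ := by rw [Matrix.mul_assoc]
  have hBh1 : Bᴴ * Bdᴴ * Bᴴ = Bᴴ := by
    calc Bᴴ * Bdᴴ * Bᴴ = (B * Bd * B)ᴴ := by
          simp only [conjTranspose_mul, Matrix.mul_assoc]
      _ = Bᴴ := by rw [hB1]
  constructor
  · rintro ⟨h1, h2, h3⟩
    have hr1 : B * Bd * A = A := (range_le_iff A B Bd hB1).mp h1
    have hr2 : Bᴴ * Bdᴴ * Aᴴ = Aᴴ := (range_le_iff Aᴴ Bᴴ Bdᴴ hBh1).mp h2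
    have h3' : Aᴴ * B * Aᴴ = Aᴴ * A * Aᴴ := by
      calc Aᴴ * B * Aᴴ = (A * Bᴴ * A)ᴴ := by
            simp only [conjTranspose_mul, conjTranspose_conjTranspose, Matrix.mul_assoc]
        _ = (A * Aᴴ * A)ᴴ := by rw [h3]
        _ = Aᴴ * A * Aᴴ := by
            simp only [conjTranspose_mul, conjTranspose_conjTranspose, Matrix.mul_assoc]
    refine ⟨?_, ?_, ?_⟩
    · -- Ad = Ad * B * Ad
      calc Ad = Ad * A * Ad := hA2.symm
        _ = (Ad * Adᴴ * Aᴴ) * A * (Aᴴ * Adᴴ * Ad) := by rw [← e2, ← e1]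
        _ = Ad * Adᴴ * ((Aᴴ * A * Aᴴ) * (Adᴴ * Ad)) := by simp only [Matrix.mul_assoc]
        _ = Ad * Adᴴ * ((Aᴴ * B * Aᴴ) * (Adᴴ * Ad)) := by rw [← h3']
        _ = (Ad * Adᴴ * Aᴴ) * B * (Aᴴ * Adᴴ * Ad) := by simp only [Matrix.mul_assoc]
        _ = Ad * B * Ad := by rw [← e2, ← e1]
    · -- Ad = Ad * B * Bd
      have hAh : Aᴴ * (B * Bd) = Aᴴ := by
        calc Aᴴ * (B * Bd) = Aᴴ * (B * Bd)ᴴ := by rw [hB3]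
          _ = (B * Bd * A)ᴴ := by
              simp only [conjTranspose_mul, Matrix.mul_assoc]
          _ = Aᴴ := by rw [hr1]
      calc Ad = Ad * Adᴴ * Aᴴ := e2
        _ = Ad * Adᴴ * (Aᴴ * (B * Bd)) := by rw [hAh]
        _ = (Ad * Adᴴ * Aᴴ) * B * Bd := by simp only [Matrix.mul_assoc]
        _ = Ad * B * Bd := by rw [← e2]
    · -- Ad = Bd * B * Ad
      have hAh2 : Bd * B * Aᴴ = Aᴴ := by
        calc Bd * B * Aᴴ = (Bd * B)ᴴ * Aᴴ := by rw [hB4]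
          _ = Bᴴ * Bdᴴ * Aᴴ := by rw [conjTranspose_mul]
          _ = Aᴴ := hr2
      calc Ad = Aᴴ * Adᴴ * Ad := e1
        _ = (Bd * B * Aᴴ) * (Adᴴ * Ad) := by rw [hAh2, Matrix.mul_assoc]
        _ = Bd * B * (Aᴴ * Adᴴ * Ad) := by simp only [Matrix.mul_assoc]
        _ = Bd * B * Ad := by rw [← e1]
  · rintro ⟨k1, k2, k3⟩
    have k1' : Adᴴ = Adᴴ * Bᴴ * Adᴴ := by
      calc Adᴴ = (Ad * B * Ad)ᴴ := by rw [← k1]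
        _ = Adᴴ * Bᴴ * Adᴴ := by
            simp only [conjTranspose_mul, Matrix.mul_assoc]
    have k2' : Adᴴ = (B * Bd) * Adᴴ := by
      calc Adᴴ = (Ad * (B * Bd))ᴴ := by rw [← Matrix.mul_assoc, ← k2]
        _ = (B * Bd)ᴴ * Adᴴ := by rw [conjTranspose_mul]
        _ = (B * Bd) * Adᴴ := by rw [hB3]
    have k3' : Adᴴ = Adᴴ * (Bd * B) := by
      calc Adᴴ = ((Bd * B) * Ad)ᴴ := by rw [Matrix.mul_assoc, ← Matrix.mul_assoc, ← k3]
        _ = Adᴴ * (Bd * B)ᴴ := by rw [conjTranspose_mul]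
        _ = Adᴴ * (Bd * B) := by rw [hB4]
    have hr1 : B * Bd * A = A := by
      calc B * Bd * A = B * Bd * (Adᴴ * Aᴴ * A) := by rw [← e3]
        _ = ((B * Bd) * Adᴴ) * (Aᴴ * A) := by simp only [Matrix.mul_assoc]
        _ = Adᴴ * (Aᴴ * A) := by rw [← k2']
        _ = Adᴴ * Aᴴ * A := by rw [Matrix.mul_assoc]
        _ = A := e3.symm
    have hr2 : A * (Bd * B) = A := by
      calc A * (Bd * B) = (A * Aᴴ * Adᴴ) * (Bd * B) := by rw [← e4]
        _ = A * Aᴴ * (Adᴴ * (Bd * B)) := by simp only [Matrix.mul_assoc]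
        _ = A * Aᴴ * Adᴴ := by rw [← k3']
        _ = A := e4.symm
    have hr2' : Bᴴ * Bdᴴ * Aᴴ = Aᴴ := by
      calc Bᴴ * Bdᴴ * Aᴴ = (A * (Bd * B))ᴴ := by
            simp only [conjTranspose_mul, Matrix.mul_assoc]
        _ = Aᴴ := by rw [hr2]
    refine ⟨(range_le_iff A B Bd hB1).mpr hr1, (range_le_iff Aᴴ Bᴴ Bdᴴ hBh1).mpr hr2', ?_⟩
    calc A * Bᴴ * A = (A * Aᴴ * Adᴴ) * Bᴴ * (Adᴴ * Aᴴ * A) := by rw [← e4, ← e3]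
      _ = A * Aᴴ * ((Adᴴ * Bᴴ * Adᴴ) * (Aᴴ * A)) := by simp only [Matrix.mul_assoc]
      _ = A * Aᴴ * (Adᴴ * (Aᴴ * A)) := by rw [← k1']
      _ = (A * Aᴴ * Adᴴ) * (Aᴴ * A) := by simp only [Matrix.mul_assoc]
      _ = A * (Aᴴ * A) := by rw [← e4]
      _ = A * Aᴴ * A := by rw [Matrix.mul_assoc]
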